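/- Let H be a symmetric positive semidefinite n×n matrix, ρ > 0, and D, V, G ∈ ℝ^{n×m}. Define W = (H + ρI)^{-1}(G - V + ρD). Then the Frobenius norm of W - D + V/ρ is at most (1/ρ)(‖G - H D‖_F + ‖H V‖_F / ρ). -/

import Mathlib

open scoped Classical
open scoped Matrix

/-- Frobenius norm of a real matrix. -/
noncomputable def frob {n m : ℕ} (A : Matrix (Fin n) (Fin m) ℝ) : ℝ :=
  Real.sqrt (∑ i, ∑ j, (A i j) ^ 2)

/-- Spectral norm (operator 2-norm, largest singular value) of a real matrix. -/
noncomputable def spec {n m : ℕ} (A : Matrix (Fin n) (Fin m) ℝ) : ℝ :=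
  ‖LinearMap.toContinuousLinearMap (Matrix.toEuclideanLin A)‖

/-- Number of nonzero entries of a matrix (the ℓ₀-"norm"). -/
noncomputable def l0 {n m : ℕ} (A : Matrix (Fin n) (Fin m) ℝ) : ℕ :=
  (Finset.univ.filter fun p : Fin n × Fin m => A p.1 p.2 ≠ 0).card
lemma frob_eq_norm {n m : ℕ} (A : Matrix (Fin n) (Fin m) ℝ) :
    frob A = ‖(WithLp.equiv 2 (Fin n × Fin m → ℝ)).symm (fun p => A p.1 p.2)‖ := by
  rw [EuclideanSpace.norm_eq]
  simp [frob, Real.norm_eq_abs, sq_abs, Fintype.sum_prod_type]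

lemma frob_add_le {n m : ℕ} (A B : Matrix (Fin n) (Fin m) ℝ) :
    frob (A + B) ≤ frob A + frob B := by
  rw [frob_eq_norm, frob_eq_norm, frob_eq_norm]
  calc _ = ‖(WithLp.equiv 2 (Fin n × Fin m → ℝ)).symm (fun p => A p.1 p.2)
        + (WithLp.equiv 2 (Fin n × Fin m → ℝ)).symm (fun p => B p.1 p.2)‖ := rfl
    _ ≤ _ := norm_add_le _ _

lemma frob_smul {n m : ℕ} (c : ℝ) (hc : 0 ≤ c) (A : Matrix (Fin n) (Fin m) ℝ) :
    frob (c • A) = c * frob A := by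
  rw [frob_eq_norm, frob_eq_norm (A := A)]
  have h : ((WithLp.equiv 2 (Fin n × Fin m → ℝ)).symm (fun p => (c • A) p.1 p.2))
      = c • ((WithLp.equiv 2 (Fin n × Fin m → ℝ)).symm (fun p => A p.1 p.2)) := rfl
  rw [h, norm_smul, Real.norm_eq_abs, abs_of_nonneg hc]

lemma col_bound {n : ℕ} (H : Matrix (Fin n) (Fin n) ℝ) (hH : H.PosSemidef)
    (ρ : ℝ) (hρ : 0 < ρ) (x : Fin n → ℝ) :
    ∑ i, (((H + ρ • 1)⁻¹ *ᵥ x) i) ^ 2 ≤ ρ⁻¹ ^ 2 * ∑ i, (x i) ^ 2 := by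
  have hM : (H + ρ • (1 : Matrix (Fin n) (Fin n) ℝ)).PosDef := by
    refine Matrix.PosDef.posSemidef_add hH ?_
    rw [Matrix.smul_one_eq_diagonal]
    exact Matrix.PosDef.diagonal fun _ => hρ
  set M := H + ρ • (1 : Matrix (Fin n) (Fin n) ℝ) with hMdef
  set z := M⁻¹ *ᵥ x with hz
  have hMz : M *ᵥ z = x := by
    rw [hz, Matrix.mulVec_mulVec, Matrix.mul_nonsing_inv _ hM.det_pos.ne'.isUnit,
      Matrix.one_mulVec]
  have hSz : (0:ℝ) ≤ ∑ i, (z i)^2 := Finset.sum_nonneg fun _ _ => sq_nonneg _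
  have hSx : (0:ℝ) ≤ ∑ i, (x i)^2 := Finset.sum_nonneg fun _ _ => sq_nonneg _
  have hlow : ρ * ∑ i, (z i)^2 ≤ z ⬝ᵥ x := by
    have h0 : (0:ℝ) ≤ star z ⬝ᵥ (H *ᵥ z) := hH.dotProduct_mulVec_nonneg z
    rw [star_trivial] at h0
    have : z ⬝ᵥ x = z ⬝ᵥ (H *ᵥ z) + ρ * ∑ i, (z i)^2 := by
      rw [← hMz, hMdef, Matrix.add_mulVec, dotProduct_add,
        Matrix.smul_mulVec, Matrix.one_mulVec, dotProduct_smul]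
      simp [dotProduct, sq, smul_eq_mul, Finset.mul_sum]
    linarith
  have hcs : (z ⬝ᵥ x)^2 ≤ (∑ i, (z i)^2) * (∑ i, (x i)^2) :=
    Finset.sum_mul_sq_le_sq_mul_sq _ _ _
  have hsq : (ρ * ∑ i, (z i)^2)^2 ≤ (∑ i, (z i)^2) * (∑ i, (x i)^2) := by
    refine le_trans ?_ hcs
    have : 0 ≤ ρ * ∑ i, (z i)^2 := mul_nonneg hρ.le hSz
    nlinarith [hlow]
  have hinv : ρ * ρ⁻¹ = 1 := mul_inv_cancel₀ hρ.ne'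
  rcases eq_or_lt_of_le hSz with h0 | h0
  · rw [← h0]
    positivity
  · have h1 : ρ^2 * ∑ i, (z i)^2 ≤ ∑ i, (x i)^2 := by nlinarith [hsq, h0]
    have h2 : ρ⁻¹^2 * ρ^2 = 1 := by
      rw [← mul_pow, inv_mul_cancel₀ hρ.ne', one_pow]
    nlinarith [mul_le_mul_of_nonneg_left h1 (sq_nonneg ρ⁻¹), h2]

lemma frob_inv_mul_le {n m : ℕ} (H : Matrix (Fin n) (Fin n) ℝ) (hH : H.PosSemidef)
    (ρ : ℝ) (hρ : 0 < ρ) (X : Matrix (Fin n) (Fin m) ℝ) :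
    frob ((H + ρ • 1)⁻¹ * X) ≤ ρ⁻¹ * frob X := by
  have hcols : ∀ j, ∑ i, (((H + ρ • 1)⁻¹ * X) i j) ^ 2 ≤ ρ⁻¹ ^ 2 * ∑ i, (X i j) ^ 2 := by
    intro j
    simpa [Matrix.mulVec, Matrix.mul_apply, dotProduct] using
      col_bound H hH ρ hρ (fun k => X k j)
  have hsum : ∑ i, ∑ j, (((H + ρ • 1)⁻¹ * X) i j) ^ 2
      ≤ ρ⁻¹ ^ 2 * ∑ i, ∑ j, (X i j) ^ 2 := by
    rw [Finset.sum_comm, Finset.sum_comm (f := fun i j => (X i j) ^ 2), Finset.mul_sum]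
    exact Finset.sum_le_sum fun j _ => hcols j
  calc frob ((H + ρ • 1)⁻¹ * X) ≤ Real.sqrt (ρ⁻¹ ^ 2 * ∑ i, ∑ j, (X i j) ^ 2) :=
        Real.sqrt_le_sqrt hsum
    _ = ρ⁻¹ * frob X := by
        rw [Real.sqrt_mul (sq_nonneg _), Real.sqrt_sq (inv_nonneg.mpr hρ.le)]
        rfl

/-- Frobenius-norm bound on W - D + V/ρ for the ADMM W-update. -/
theorem W_update_frob_bound {n m : ℕ} (H : Matrix (Fin n) (Fin n) ℝ)
    (hH : H.PosSemidef) (ρ : ℝ) (hρ : 0 < ρ)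
    (D V G W : Matrix (Fin n) (Fin m) ℝ)
    (hW : W = (H + ρ • 1)⁻¹ * (G - V + ρ • D)) :
    frob (W - D + ρ⁻¹ • V) ≤ ρ⁻¹ * (frob (G - H * D) + frob (H * V) / ρ) := by
  have hM : (H + ρ • (1 : Matrix (Fin n) (Fin n) ℝ)).PosDef := by
    refine Matrix.PosDef.posSemidef_add hH ?_
    rw [Matrix.smul_one_eq_diagonal]
    exact Matrix.PosDef.diagonal fun _ => hρ
  set M := H + ρ • (1 : Matrix (Fin n) (Fin n) ℝ) with hMdef
  have hMinv : M⁻¹ * M = 1 := Matrix.nonsing_inv_mul _ hM.det_pos.ne'.isUnit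
  have hD : M⁻¹ * (M * D) = D := by rw [← Matrix.mul_assoc, hMinv, Matrix.one_mul]
  have hV : M⁻¹ * (M * V) = V := by rw [← Matrix.mul_assoc, hMinv, Matrix.one_mul]
  have hX : (G - V + ρ • D) - M * D + ρ⁻¹ • (M * V)
      = (G - H * D) + ρ⁻¹ • (H * V) := by
    rw [hMdef, Matrix.add_mul, Matrix.add_mul, Matrix.smul_mul, Matrix.smul_mul,
      Matrix.one_mul, Matrix.one_mul, smul_add, smul_smul, inv_mul_cancel₀ hρ.ne',
      one_smul]
    abel
  have key : W - D + ρ⁻¹ • V = M⁻¹ * ((G - H * D) + ρ⁻¹ • (H * V)) := by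
    rw [← hX, hW]
    simp only [Matrix.mul_add, Matrix.mul_sub, Matrix.mul_smul, hD, hV]
  rw [key]
  calc frob (M⁻¹ * ((G - H * D) + ρ⁻¹ • (H * V)))
      ≤ ρ⁻¹ * frob ((G - H * D) + ρ⁻¹ • (H * V)) := frob_inv_mul_le H hH ρ hρ _
    _ ≤ ρ⁻¹ * (frob (G - H * D) + frob (ρ⁻¹ • (H * V))) := by
        have := frob_add_le (G - H * D) (ρ⁻¹ • (H * V))
        have h0 : (0:ℝ) ≤ ρ⁻¹ := inv_nonneg.mpr hρ.le
        nlinarith [this]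
    _ = ρ⁻¹ * (frob (G - H * D) + frob (H * V) / ρ) := by
        rw [frob_smul _ (inv_nonneg.mpr hρ.le), div_eq_mul_inv, mul_comm (frob (H*V))]
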